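/- Let R be a commutative Noetherian ring with identity and A an ideal of R such that 1 − x is not a zero divisor for every x ∈ A. Then ⋂_{n≥1} Aⁿ = 0 (Krull's intersection theorem). -/
import Mathlib

theorem krull_intersection {R : Type*} [CommRing R] [IsNoetherianRing R]
    (A : Ideal R) (h : ∀ x ∈ A, ∀ s : R, (1 - x) * s = 0 → s = 0) :
    ⨅ n : ℕ, A ^ (n + 1) = ⊥ := by
  ext x
  simp only [Submodule.mem_bot, Ideal.mem_iInf]
  constructor
  · intro hx
    have hx' : x ∈ (⨅ i : ℕ, A ^ i • ⊤ : Submodule R R) := by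
      rw [Submodule.mem_iInf]
      intro i
      cases i with
      | zero => simp
      | succ n => simpa using hx n
    obtain ⟨r, hr⟩ := (Ideal.mem_iInf_smul_pow_eq_bot_iff A x).mp hx'
    exact h r r.2 x (by rw [sub_mul, one_mul]; rw [smul_eq_mul] at hr; rw [hr]; ring)
  · rintro rfl n; exact zero_mem _
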